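/- There exists an integral domain R and a function f from the nonzero elements of R to the non-negative integers such that f is ultra-Euclidean on R but f is neither strongly Euclidean nor uniquely Euclidean on R. (Concretely, one may take R to be the field with four elements F₄ = {0, 1, α, β} and f given by f(1) = 0, f(α) = f(β) = 1.) -/

import Mathlib

/-- `f` is a Euclidean function on `R`: for all `a b : R` with `b ≠ 0`, there exist
`q, r` with `a = q * b + r` and (`r = 0` or `f r < f b`). -/
def IsEuclideanFn {R : Type*} [CommRing R] (f : R → ℕ) : Prop :=
  ∀ a b : R, b ≠ 0 → ∃ q r : R, a = q * b + r ∧ (r = 0 ∨ f r < f b)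

/-- `f` is strongly Euclidean: Euclidean, and `f a ≤ f (a * b)` for nonzero `a, b`. -/
def IsStronglyEuclideanFn {R : Type*} [CommRing R] (f : R → ℕ) : Prop :=
  IsEuclideanFn f ∧ ∀ a b : R, a ≠ 0 → b ≠ 0 → f a ≤ f (a * b)

/-- `f` is ultra-Euclidean: Euclidean, and `f (a + b) ≤ max (f a) (f b)` for nonzero
`a, b` with `a + b ≠ 0`. -/
def IsUltraEuclideanFn {R : Type*} [CommRing R] (f : R → ℕ) : Prop :=
  IsEuclideanFn f ∧ ∀ a b : R, a ≠ 0 → b ≠ 0 → a + b ≠ 0 → f (a + b) ≤ max (f a) (f b)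

/-- `f` is uniquely Euclidean: for all `a b : R` with `b ≠ 0`, there is a *unique* pair
`(q, r)` with `a = q * b + r` and (`r = 0` or `f r < f b`). -/
def IsUniquelyEuclideanFn {R : Type*} [CommRing R] (f : R → ℕ) : Prop :=
  ∀ a b : R, b ≠ 0 → ∃! qr : R × R, a = qr.1 * b + qr.2 ∧ (qr.2 = 0 ∨ f qr.2 < f b)

/-- The refinement of `f`: `f̃ a` is the minimum of `f (a * b)` over nonzero `b`. -/
noncomputable def refinement {R : Type*} [CommRing R] (f : R → ℕ) (a : R) : ℕ :=
  sInf {n : ℕ | ∃ b : R, b ≠ 0 ∧ f (a * b) = n}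

lemma F4_exists_third : ∃ α : GaloisField 2 2, α ≠ 0 ∧ α ≠ 1 := by
  classical
  by_contra h
  push_neg at h
  haveI : Fintype (GaloisField 2 2) := Fintype.ofFinite _
  have hcard : Fintype.card (GaloisField 2 2) = 4 := by
    have := GaloisField.card 2 2 (by norm_num)
    rw [Nat.card_eq_fintype_card] at this
    simpa using this
  have hsub : (Finset.univ : Finset (GaloisField 2 2)) ⊆ {0, 1} := by
    intro x _
    rcases Classical.em (x = 0) with h0 | h0
    · simp [h0]
    · simp [h x h0]
  have := Finset.card_le_card hsub
  simp [Finset.card_univ, hcard] at this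

theorem exists_ultra_not_strongly_not_uniquely :
    ∃ (R : Type) (_ : CommRing R) (f : R → ℕ),
      IsDomain R ∧ IsUltraEuclideanFn f ∧
      ¬ IsStronglyEuclideanFn f ∧ ¬ IsUniquelyEuclideanFn f := by
  classical
  refine ⟨GaloisField 2 2, inferInstance, fun x => if x = 1 then 0 else 1,
    inferInstance, ?_, ?_, ?_⟩
  · constructor
    · intro a b hb
      exact ⟨a * b⁻¹, 0, by field_simp; simp, Or.inl rfl⟩
    · intro a b ha hb hab
      by_cases h : a + b = 1
      · simp [h]
      · have hne : ¬ (a = 1 ∧ b = 1) := by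
          rintro ⟨rfl, rfl⟩
          apply hab
          have : (2 : GaloisField 2 2) = 0 := by
            exact_mod_cast CharP.cast_eq_zero (GaloisField 2 2) 2
          linear_combination this
        simp only [if_neg h]
        rcases Classical.em (a = 1) with ha1 | ha1
        · have hb1 : b ≠ 1 := fun hb1 => hne ⟨ha1, hb1⟩
          simp [hb1]
        · simp [ha1]
  · obtain ⟨α, hα0, hα1⟩ := F4_exists_third
    rintro ⟨_, h⟩
    have := h α α⁻¹ hα0 (inv_ne_zero hα0)
    rw [mul_inv_cancel₀ hα0] at this
    simp [hα1] at this
  · obtain ⟨α, hα0, hα1⟩ := F4_exists_third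
    intro h
    obtain ⟨qr, _, huniq⟩ := h 0 α hα0
    have h1 : ((0, 0) : _ × _) = qr := huniq (0, 0) (by simp)
    have h2 : ((-α⁻¹, 1) : _ × _) = qr := by
      apply huniq
      constructor
      · simp [mul_comm, mul_inv_cancel₀ hα0]
      · right; simp [hα1]
    rw [← h1] at h2
    have := congrArg Prod.snd h2
    simp at this
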